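/- In the 'unavoidable first backup' case—where both p_2 and b_2 may share edges with b_1 but neither shares an edge with p_1—the failure probability of the second connection equals P_f(p_2 ∩ b_2) + P_f(p_1 − b_1), where p_1 − b_1 denotes the set of edges of p_1 not on b_1. -/
import Mathlib


open scoped Classical

/-- Unavoidable first backup case: both `p₂` and `b₂` share edges with `b₁` but
neither shares an edge with `p₁`. With the failed connection-2 events being a
failed link in `p₂ ∩ b₂` or a failed link in `p₁ − b₁` (which triggers preemption
through the links shared with `b₁`), the failure probability of the second
connection equals `P_f(p₂ ∩ b₂) + P_f(p₁ − b₁)`. -/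
theorem stmt_12 {V : Type*} [Fintype V] (G : SimpleGraph V)
    (P : Sym2 V → ℝ) (hP0 : ∀ e, 0 ≤ P e)
    (hP1 : (∑ e : Sym2 V, if e ∈ G.edgeSet then P e else 0) = 1)
    {s₁ t₁ s₂ t₂ : V} (p₁ b₁ : G.Walk s₁ t₁) (p₂ b₂ : G.Walk s₂ t₂)
    (h1 : List.Disjoint p₂.edges p₁.edges) (h2 : List.Disjoint b₂.edges p₁.edges)
    (h3 : ∃ f ∈ b₁.edges, f ∈ p₂.edges) (h4 : ∃ f ∈ b₁.edges, f ∈ b₂.edges)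
    (fails : Sym2 V → Prop)
    (hfails : ∀ e, fails e ↔
      (e ∈ p₂.edges ∧ e ∈ b₂.edges) ∨ (e ∈ p₁.edges ∧ e ∉ b₁.edges)) :
    (∑ e : Sym2 V, if fails e then P e else 0)
      = (∑ e ∈ p₂.edges.toFinset ∩ b₂.edges.toFinset, P e)
        + ∑ e ∈ p₁.edges.toFinset \ b₁.edges.toFinset, P e := by
  set A := p₂.edges.toFinset ∩ b₂.edges.toFinset with hA
  set B := p₁.edges.toFinset \ b₁.edges.toFinset with hB
  have key : ∀ e : Sym2 V,
      (if fails e then P e else 0)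
        = (if e ∈ A then P e else 0) + (if e ∈ B then P e else 0) := by
    intro e
    have hAe : e ∈ A ↔ (e ∈ p₂.edges ∧ e ∈ b₂.edges) := by
      simp [hA, List.mem_toFinset]
    have hBe : e ∈ B ↔ (e ∈ p₁.edges ∧ e ∉ b₁.edges) := by
      simp [hB, List.mem_toFinset]
    by_cases hAc : e ∈ A
    · have hnB : e ∉ B := by
        intro hBc
        exact h1 (hAe.mp hAc).1 (hBe.mp hBc).1
      have : fails e := (hfails e).mpr (Or.inl (hAe.mp hAc))
      simp [this, hAc, hnB]
    · by_cases hBc : e ∈ B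
      · have : fails e := (hfails e).mpr (Or.inr (hBe.mp hBc))
        simp [this, hAc, hBc]
      · have : ¬ fails e := by
          intro hf
          rcases (hfails e).mp hf with h | h
          · exact hAc (hAe.mpr h)
          · exact hBc (hBe.mpr h)
        simp [this, hAc, hBc]
  calc (∑ e : Sym2 V, if fails e then P e else 0)
      = ∑ e : Sym2 V, ((if e ∈ A then P e else 0) + (if e ∈ B then P e else 0)) := by
        exact Finset.sum_congr rfl fun e _ => key e
    _ = (∑ e : Sym2 V, if e ∈ A then P e else 0)
        + (∑ e : Sym2 V, if e ∈ B then P e else 0) := Finset.sum_add_distrib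
    _ = (∑ e ∈ A, P e) + ∑ e ∈ B, P e := by
        rw [Finset.sum_ite_mem, Finset.sum_ite_mem, Finset.univ_inter, Finset.univ_inter]
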